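/- arXiv:1904.05725 — 2 statements merged into one kernel-verified Lean document; each statement's English description precedes it below -/
import Mathlib

section
/- Fix n ≥ 1 and let A be an n×n random matrix whose n² entries are i.i.d. standard normal random variables. Then for every k with 0 ≤ k ≤ n, P(s(A) = k) = P(s(A) = n − k), where s(A) is the stability index of A. -/
open Polynomial MeasureTheory ProbabilityTheory

open Matrix

/-- The stability index of a real `n × n` matrix: the number of complex roots, counted
with multiplicity, of its characteristic polynomial that have negative real part. -/
noncomputable def stabilityIndex {n : ℕ} (A : Matrix (Fin n) (Fin n) ℝ) : ℕ :=
  Multiset.card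
    (((A.charpoly).map (algebraMap ℝ ℂ)).roots.filter fun z => z.re < 0)


lemma gaussian_null_of_finite {s : Set ℝ} (hs : s.Finite) : gaussianReal 0 1 s = 0 :=
  gaussianReal_absolutelyContinuous 0 one_ne_zero (hs.countable.measure_zero _)

lemma mvpoly_null : ∀ (m : ℕ) (p : MvPolynomial (Fin m) ℝ), p ≠ 0 →
    Measure.pi (fun _ : Fin m => gaussianReal 0 1) {a | MvPolynomial.eval a p = 0} = 0 := by
  intro m
  induction m with
  | zero =>
    intro p hp
    obtain ⟨c, rfl⟩ := MvPolynomial.C_surjective (Fin 0) p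
    have hc : c ≠ 0 := fun h => hp (by rw [h, map_zero])
    convert measure_empty (μ := Measure.pi (fun _ : Fin 0 => gaussianReal 0 1))
    ext a
    simp [hc]
  | succ m ih =>
    intro p hp
    set q := MvPolynomial.finSuccEquiv ℝ m p with hq
    have hq0 : q ≠ 0 := fun h => hp ((map_eq_zero_iff _ (MvPolynomial.finSuccEquiv ℝ m).injective).mp h)
    set S : Set (Fin (m+1) → ℝ) := {a | MvPolynomial.eval a p = 0} with hS
    have hSm : MeasurableSet S :=
      ((MvPolynomial.continuous_eval p).measurable) (MeasurableSet.singleton 0)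
    set e := MeasurableEquiv.piFinSuccAbove (fun _ : Fin (m+1) => ℝ) 0 with he
    have mp := measurePreserving_piFinSuccAbove (fun _ : Fin (m+1) => gaussianReal 0 1) 0
    have key : Measure.pi (fun _ : Fin (m+1) => gaussianReal 0 1) S
        = ((gaussianReal 0 1).prod (Measure.pi fun _ : Fin m => gaussianReal 0 1))
          (e.symm ⁻¹' S) := (mp.symm e).measure_preimage hSm.nullMeasurableSet |>.symm
    rw [key]
    have hTm : MeasurableSet (e.symm ⁻¹' S) := e.symm.measurable hSm
    rw [Measure.measure_prod_null hTm]
    -- bad finite set of x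
    have hF : {x : ℝ | Polynomial.eval (MvPolynomial.C x) q = 0}.Finite := by
      have : {x : ℝ | Polynomial.eval (MvPolynomial.C x) q = 0}
          ⊆ MvPolynomial.C ⁻¹' {d | Polynomial.IsRoot q d} := fun x hx => hx
      exact Set.Finite.subset ((Polynomial.finite_setOf_isRoot hq0).preimage
        (MvPolynomial.C_injective _ _).injOn) this
    have hae : ∀ᵐ x ∂(gaussianReal 0 1), Polynomial.eval (MvPolynomial.C x) q ≠ 0 := by
      rw [ae_iff]
      convert gaussian_null_of_finite hF using 2
      simp
    filter_upwards [hae] with x hx'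
    have hslice : Prod.mk x ⁻¹' (e.symm ⁻¹' S)
        = {s : Fin m → ℝ | MvPolynomial.eval s (Polynomial.eval (MvPolynomial.C x) q) = 0} := by
      ext s
      have h1 : e.symm (x, s) = Fin.cons x s := by
        simp [he, MeasurableEquiv.piFinSuccAbove, Fin.insertNthEquiv, Fin.insertNth_zero]
      have h2 : MvPolynomial.eval (Fin.cons x s : Fin (m+1) → ℝ) p
          = MvPolynomial.eval s (Polynomial.eval (MvPolynomial.C x) q) := by
        rw [MvPolynomial.eval_eq_eval_mv_eval']
        rw [show Polynomial.eval (MvPolynomial.C x) q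
            = Polynomial.eval₂ (RingHom.id _) (MvPolynomial.C x) q from rfl]
        rw [Polynomial.hom_eval₂, Polynomial.eval_map]
        simp
        rfl
      simp only [Set.mem_preimage, Set.mem_setOf_eq, hS, h1, h2]
    rw [hslice]
    exact ih _ hx'

lemma mvpoly_null' {ι : Type*} [Fintype ι] (p : MvPolynomial ι ℝ) (hp : p ≠ 0) :
    Measure.pi (fun _ : ι => gaussianReal 0 1) {a | MvPolynomial.eval a p = 0} = 0 := by
  classical
  set m := Fintype.card ι
  set eα : Fin m ≃ ι := (Fintype.equivFin ι).symm with heα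
  set g := MeasurableEquiv.arrowCongr' eα (MeasurableEquiv.refl ℝ) with hg
  have mp : MeasurePreserving g (Measure.pi fun _ : Fin m => gaussianReal 0 1)
      (Measure.pi fun _ : ι => gaussianReal 0 1) :=
    measurePreserving_arrowCongr' _ _ eα (MeasurableEquiv.refl ℝ)
      (fun _ => MeasurePreserving.id _)
  have hSm : MeasurableSet {a : ι → ℝ | MvPolynomial.eval a p = 0} :=
    (MvPolynomial.continuous_eval p).measurable (MeasurableSet.singleton 0)
  rw [← mp.measure_preimage hSm.nullMeasurableSet]
  have hpre : g ⁻¹' {a : ι → ℝ | MvPolynomial.eval a p = 0}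
      = {b : Fin m → ℝ | MvPolynomial.eval b (MvPolynomial.rename eα.symm p) = 0} := by
    ext b
    have : g b = b ∘ eα.symm := rfl
    simp [this, MvPolynomial.eval_rename]
  rw [hpre]
  exact mvpoly_null m _ fun h => hp ((MvPolynomial.rename_injective _ eα.symm.injective)
    (by rw [h, map_zero]))

lemma roots_charpoly_neg {n : ℕ} (B : Matrix (Fin n) (Fin n) ℂ) :
    (-B).charpoly.roots = B.charpoly.roots.map (fun z => -z) := by
  set s := B.charpoly.roots with hs
  have hB : B.charpoly = (s.map fun a => X - C a).prod :=
    (IsAlgClosed.splits _).eq_prod_roots_of_monic (Matrix.charpoly_monic B)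
  have hcard : Multiset.card s = n := by
    rw [hs, (splits_iff_card_roots).mp (IsAlgClosed.splits _),
      Matrix.charpoly_natDegree_eq_dim, Fintype.card_fin]
  set φ : ℂ[X] →+* ℂ[X] := eval₂RingHom Polynomial.C (-X) with hφ
  have h1 : φ B.charpoly = (-1) ^ n * (-B).charpoly := by
    rw [Matrix.charpoly, Matrix.charpoly, RingHom.map_det, RingHom.mapMatrix_apply]
    have hm : (Matrix.charmatrix B).map φ = -(Matrix.charmatrix (-B)) := by
      ext i j
      by_cases h : i = j
      · subst h
        simp [hφ, Matrix.charmatrix_apply_eq, sub_eq_add_neg]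
        ring
      · simp [hφ, Matrix.charmatrix_apply_ne _ _ _ h]
    rw [hm, Matrix.det_neg, Fintype.card_fin]
  have h2 : φ B.charpoly = (-1) ^ n * ((s.map (fun z => -z)).map fun a => X - C a).prod := by
    rw [hB, map_multiset_prod, Multiset.map_map, Multiset.map_map]
    have hc : Multiset.map (⇑φ ∘ fun a => X - C a) s
        = Multiset.map (fun a => (fun _ : ℂ => (-1 : ℂ[X])) a * ((fun a : ℂ => X - C (-a)) a)) s :=
      Multiset.map_congr rfl (fun a _ => by simp [hφ]; ring)
    rw [hc, Multiset.prod_map_mul, Multiset.map_const', Multiset.prod_replicate, hcard]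
    rfl
  have h3 : (-B).charpoly = ((s.map (fun z => -z)).map fun a => X - C a).prod :=
    mul_left_cancel₀ (pow_ne_zero n (neg_ne_zero.mpr (one_ne_zero))) (h1.symm.trans h2)
  rw [h3, roots_multiset_prod_X_sub_C]


lemma map_neg_matrix {n : ℕ} (A : Matrix (Fin n) (Fin n) ℝ) :
    (-A).map (algebraMap ℝ ℂ) = -(A.map (algebraMap ℝ ℂ)) := by
  ext i j; simp [Matrix.map_apply]

lemma roots_map_neg {n : ℕ} (A : Matrix (Fin n) (Fin n) ℝ) :
    ((-A).charpoly.map (algebraMap ℝ ℂ)).roots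
      = ((A.charpoly.map (algebraMap ℝ ℂ)).roots).map (fun z => -z) := by
  rw [← Matrix.charpoly_map, ← Matrix.charpoly_map, map_neg_matrix, roots_charpoly_neg]

lemma card_roots_charpoly {n : ℕ} (A : Matrix (Fin n) (Fin n) ℝ) :
    Multiset.card ((A.charpoly.map (algebraMap ℝ ℂ)).roots) = n := by
  rw [← Matrix.charpoly_map, (splits_iff_card_roots).mp (IsAlgClosed.splits _),
    Matrix.charpoly_natDegree_eq_dim, Fintype.card_fin]

lemma stab_le {n : ℕ} (A : Matrix (Fin n) (Fin n) ℝ) : stabilityIndex A ≤ n := by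
  rw [stabilityIndex]
  exact le_trans (Multiset.card_le_card (Multiset.filter_le _ _))
    (le_of_eq (card_roots_charpoly A))

lemma stab_neg {n : ℕ} (A : Matrix (Fin n) (Fin n) ℝ)
    (h0 : ∀ z ∈ ((A.charpoly).map (algebraMap ℝ ℂ)).roots, z.re ≠ 0) :
    stabilityIndex (-A) = n - stabilityIndex A := by
  classical
  set r := ((A.charpoly).map (algebraMap ℝ ℂ)).roots with hr
  have h1 : stabilityIndex (-A) = Multiset.card (r.filter fun z => 0 < z.re) := by
    rw [stabilityIndex, roots_map_neg, Multiset.filter_map, Multiset.card_map]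
    congr 1
    apply Multiset.filter_congr
    intro z _
    simp [Function.comp]
  have h2 : Multiset.card (r.filter fun z => z.re < 0)
      + Multiset.card (r.filter fun z => 0 < z.re) = n := by
    have hadd := congrArg Multiset.card (Multiset.filter_add_not (fun z => z.re < 0) r)
    rw [Multiset.card_add] at hadd
    have hfe : r.filter (fun z => ¬ z.re < 0) = r.filter (fun z => 0 < z.re) := by
      apply Multiset.filter_congr
      intro z hz
      constructor
      · intro h; exact lt_of_le_of_ne (not_lt.mp h) (Ne.symm (h0 z hz))
      · intro h; exact not_lt.mpr h.le
    rw [hfe] at hadd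
    rw [← card_roots_charpoly A, ← hr, ← hadd]
  have hsA : stabilityIndex A = Multiset.card (r.filter fun z => z.re < 0) := rfl
  have hle := stab_le A
  omega


noncomputable def badPoly (n : ℕ) : MvPolynomial (Fin n × Fin n) ℝ :=
  Matrix.det
    (Matrix.kroneckerMap (· * ·)
        (Matrix.of fun i j => MvPolynomial.X (i, j)) (1 : Matrix (Fin n) (Fin n) _)
      + Matrix.kroneckerMap (· * ·) (1 : Matrix (Fin n) (Fin n) _)
        (Matrix.of fun i j => MvPolynomial.X (i, j)))

lemma eval_badPoly {n : ℕ} (a : Fin n × Fin n → ℝ) :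
    MvPolynomial.eval a (badPoly n)
      = Matrix.det
          (Matrix.kroneckerMap (· * ·) (Matrix.of fun i j => a (i, j)) (1 : Matrix (Fin n) (Fin n) ℝ)
            + Matrix.kroneckerMap (· * ·) (1 : Matrix (Fin n) (Fin n) ℝ)
              (Matrix.of fun i j => a (i, j))) := by
  rw [badPoly, RingHom.map_det, RingHom.mapMatrix_apply]
  congr 1
  ext ⟨i, j⟩ ⟨k, l⟩
  simp only [Matrix.map_apply, Matrix.add_apply, Matrix.kroneckerMap_apply, Matrix.of_apply,
    _root_.map_add, _root_.map_mul, MvPolynomial.eval_X, Matrix.one_apply, apply_ite,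
    _root_.map_one, _root_.map_zero]

lemma badPoly_ne_zero {n : ℕ} : badPoly n ≠ 0 := by
  intro h
  have h2 := congrArg (MvPolynomial.eval (fun p : Fin n × Fin n => if p.1 = p.2 then (1:ℝ) else 0)) h
  rw [eval_badPoly, map_zero] at h2
  have hA : (Matrix.of fun i j => if (i, j).1 = (i, j).2 then (1:ℝ) else 0)
      = (1 : Matrix (Fin n) (Fin n) ℝ) := by
    ext i j; simp [Matrix.one_apply]
  rw [hA, Matrix.one_kronecker_one] at h2
  have h3 : (1 : Matrix (Fin n × Fin n) (Fin n × Fin n) ℝ) + 1 = (2 : ℝ) • 1 := by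
    ext x y; by_cases hxy : x = y <;> simp [Matrix.one_apply, hxy] <;> norm_num
  rw [h3, Matrix.det_smul, Matrix.det_one, mul_one] at h2
  exact (pow_ne_zero _ (two_ne_zero : (2:ℝ) ≠ 0)) h2


lemma eval_charpoly_det {n : ℕ} (M : Matrix (Fin n) (Fin n) ℂ) (z : ℂ) :
    Polynomial.eval z M.charpoly = (z • (1 : Matrix (Fin n) (Fin n) ℂ) - M).det := by
  rw [Matrix.charpoly, ← Polynomial.coe_evalRingHom, RingHom.map_det, RingHom.mapMatrix_apply]
  congr 1
  ext i j
  by_cases h : i = j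
  · subst h; simp [Matrix.charmatrix_apply_eq, Matrix.one_apply]
  · simp [Matrix.charmatrix_apply_ne _ _ _ h, Matrix.one_apply, h]

lemma exists_eigvec {n : ℕ} (M : Matrix (Fin n) (Fin n) ℂ) (z : ℂ)
    (h : Polynomial.IsRoot M.charpoly z) : ∃ v ≠ 0, M *ᵥ v = z • v := by
  have hdet : (z • (1 : Matrix (Fin n) (Fin n) ℂ) - M).det = 0 := by
    rw [← eval_charpoly_det]; exact h
  obtain ⟨v, hv, hmv⟩ := Matrix.exists_mulVec_eq_zero_iff.mpr hdet
  refine ⟨v, hv, ?_⟩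
  rw [Matrix.sub_mulVec, sub_eq_zero, Matrix.smul_mulVec, Matrix.one_mulVec] at hmv
  exact hmv.symm

lemma conj_root {n : ℕ} (A : Matrix (Fin n) (Fin n) ℝ) (z : ℂ)
    (h : Polynomial.IsRoot (A.charpoly.map (algebraMap ℝ ℂ)) z) :
    Polynomial.IsRoot (A.charpoly.map (algebraMap ℝ ℂ)) ((starRingEnd ℂ) z) := by
  rw [Polynomial.IsRoot, Polynomial.eval_map] at h ⊢
  have hcomp : (starRingEnd ℂ).comp (algebraMap ℝ ℂ) = algebraMap ℝ ℂ :=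
    RingHom.ext fun r => Complex.conj_ofReal r
  have := Polynomial.hom_eval₂ A.charpoly (algebraMap ℝ ℂ) (starRingEnd ℂ) z
  rw [h, map_zero, hcomp] at this
  exact this.symm

lemma bad_root_eval_zero {n : ℕ} (a : Fin n × Fin n → ℝ) {z : ℂ}
    (hroot : z ∈ (((Matrix.of fun i j => a (i, j)).charpoly).map (algebraMap ℝ ℂ)).roots)
    (hre : z.re = 0) : MvPolynomial.eval a (badPoly n) = 0 := by
  classical
  set A := (Matrix.of fun i j => a (i, j)) with hA
  set B := A.map (algebraMap ℝ ℂ) with hB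
  have hroot1 : Polynomial.IsRoot (A.charpoly.map (algebraMap ℝ ℂ)) z :=
    (Polynomial.mem_roots'.mp hroot).2
  have hBc : B.charpoly = A.charpoly.map (algebraMap ℝ ℂ) := Matrix.charpoly_map A _
  have hstar : (starRingEnd ℂ) z = -z := by
    apply Complex.ext <;> simp [hre]
  obtain ⟨v, hv, hBv⟩ := exists_eigvec B z (by rw [hBc]; exact hroot1)
  obtain ⟨w, hw, hBw⟩ := exists_eigvec B (-z) (by
    rw [hBc, ← hstar]; exact conj_root A z hroot1)
  set u : Fin n × Fin n → ℂ := fun p => v p.1 * w p.2 with hu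
  have hune : u ≠ 0 := by
    obtain ⟨i, hi⟩ := Function.ne_iff.mp hv
    obtain ⟨j, hj⟩ := Function.ne_iff.mp hw
    intro h
    have := congrFun h (i, j)
    simp only [hu, Pi.zero_apply] at this
    exact (mul_ne_zero (by simpa using hi) (by simpa using hj)) this
  set KC := Matrix.kroneckerMap (· * ·) B (1 : Matrix (Fin n) (Fin n) ℂ)
      + Matrix.kroneckerMap (· * ·) (1 : Matrix (Fin n) (Fin n) ℂ) B with hKC
  have hv' : ∀ i, (∑ k, B i k * v k) = z * v i := fun i => congrFun hBv i
  have hw' : ∀ j, (∑ l, B j l * w l) = -z * w j := fun j => congrFun hBw j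
  have hKu : KC *ᵥ u = 0 := by
    funext p
    obtain ⟨i, j⟩ := p
    show ∑ q : Fin n × Fin n, KC (i, j) q * u q = 0
    rw [Fintype.sum_prod_type]
    have hterm : ∀ (k l : Fin n), KC (i, j) (k, l) * u (k, l)
        = (B i k * if j = l then 1 else 0) * (v k * w l)
          + (if i = k then 1 else 0) * B j l * (v k * w l) := by
      intro k l
      simp only [hKC, Matrix.add_apply, Matrix.kroneckerMap_apply, Matrix.one_apply, hu]
      ring
    have h1 : ∀ k, ∑ l, ((B i k * if j = l then 1 else 0) * (v k * w l))
        = B i k * (v k * w j) := by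
      intro k
      have hc : ∀ l, (B i k * if j = l then 1 else 0) * (v k * w l)
          = if j = l then B i k * (v k * w l) else 0 := fun l => by split <;> ring
      rw [Finset.sum_congr rfl fun l _ => hc l, Finset.sum_ite_eq]
      simp
    have h2 : ∀ l, ∑ k, (((if i = k then 1 else 0) * B j l) * (v k * w l))
        = B j l * (v i * w l) := by
      intro l
      have hc : ∀ k, ((if i = k then 1 else 0) * B j l) * (v k * w l)
          = if i = k then B j l * (v k * w l) else 0 := fun k => by split <;> ring
      rw [Finset.sum_congr rfl fun k _ => hc k, Finset.sum_ite_eq]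
      simp
    calc ∑ k, ∑ l, KC (i, j) (k, l) * u (k, l)
        = ∑ k, ∑ l, ((B i k * if j = l then 1 else 0) * (v k * w l)
          + ((if i = k then 1 else 0) * B j l) * (v k * w l)) :=
          Finset.sum_congr rfl fun k _ => Finset.sum_congr rfl fun l _ => by
            rw [hterm k l]
      _ = (∑ k, ∑ l, (B i k * if j = l then 1 else 0) * (v k * w l))
          + ∑ k, ∑ l, ((if i = k then 1 else 0) * B j l) * (v k * w l) := by
          simp [Finset.sum_add_distrib]
      _ = (∑ k, ∑ l, (B i k * if j = l then 1 else 0) * (v k * w l))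
          + ∑ l, ∑ k, ((if i = k then 1 else 0) * B j l) * (v k * w l) :=
          congrArg₂ (· + ·) rfl Finset.sum_comm
      _ = (∑ k, B i k * (v k * w j)) + ∑ l, B j l * (v i * w l) :=
          congrArg₂ (· + ·) (Finset.sum_congr rfl fun k _ => h1 k)
            (Finset.sum_congr rfl fun l _ => h2 l)
      _ = (∑ k, B i k * v k) * w j + v i * (∑ l, B j l * w l) := by
          rw [Finset.sum_mul, Finset.mul_sum]
          exact congrArg₂ (· + ·) (Finset.sum_congr rfl fun k _ => by ring)
            (Finset.sum_congr rfl fun l _ => by ring)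
      _ = 0 := by rw [hv' i, hw' j]; ring
  have hdetC : KC.det = 0 := Matrix.exists_mulVec_eq_zero_iff.mp ⟨u, hune, hKu⟩
  have hmapK : KC = (Matrix.kroneckerMap (· * ·) A (1 : Matrix (Fin n) (Fin n) ℝ)
      + Matrix.kroneckerMap (· * ·) (1 : Matrix (Fin n) (Fin n) ℝ) A).map (algebraMap ℝ ℂ) := by
    ext ⟨i, j⟩ ⟨k, l⟩
    simp only [hKC, hB, Matrix.map_apply, Matrix.add_apply, Matrix.kroneckerMap_apply,
      Matrix.one_apply, apply_ite, _root_.map_add, _root_.map_mul, _root_.map_one,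
      _root_.map_zero]
  have : algebraMap ℝ ℂ ((Matrix.kroneckerMap (· * ·) A (1 : Matrix (Fin n) (Fin n) ℝ)
      + Matrix.kroneckerMap (· * ·) (1 : Matrix (Fin n) (Fin n) ℝ) A).det) = 0 := by
    rw [RingHom.map_det]
    rw [hmapK] at hdetC
    exact hdetC
  rw [eval_badPoly]
  exact (algebraMap ℝ ℂ).injective (this.trans (map_zero _).symm)

/-- For an `n × n` random matrix with i.i.d. standard normal entries,
`P(s(A) = k) = P(s(A) = n - k)` for every `0 ≤ k ≤ n`. -/
theorem stmt_2 (n : ℕ) (hn : 1 ≤ n) (k : ℕ) (hk : k ≤ n) :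
    (Measure.pi fun _ : Fin n × Fin n => gaussianReal 0 1)
        {a | stabilityIndex (Matrix.of fun i j => a (i, j)) = k}
      = (Measure.pi fun _ : Fin n × Fin n => gaussianReal 0 1)
        {a | stabilityIndex (Matrix.of fun i j => a (i, j)) = n - k} := by
  classical
  set μ := (Measure.pi fun _ : Fin n × Fin n => gaussianReal 0 1) with hμ
  -- the negation measurable equivalence
  set eqv : ((Fin n × Fin n) → ℝ) ≃ᵐ ((Fin n × Fin n) → ℝ) :=
    { toFun := fun a => -a
      invFun := fun a => -a
      left_inv := fun a => neg_neg a
      right_inv := fun a => neg_neg a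
      measurable_toFun := measurable_pi_iff.mpr fun i => (measurable_pi_apply i).neg
      measurable_invFun := measurable_pi_iff.mpr fun i => (measurable_pi_apply i).neg } with heqv
  have hnegpres : MeasurePreserving (fun x : ℝ => -x) (gaussianReal 0 1) (gaussianReal 0 1) := by
    refine ⟨measurable_neg, ?_⟩
    have h := gaussianReal_map_const_mul (μ := 0) (v := 1) (-1)
    have h1 : (fun x : ℝ => -1 * x) = fun x : ℝ => -x := by funext x; ring
    have h2 : (NNReal.mk ((-1:ℝ)^2) (sq_nonneg _) * 1 : NNReal) = 1 := by
      ext; norm_num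
    rw [h1, h2] at h
    simpa using h
  have hmp : MeasurePreserving (⇑eqv) μ μ := by
    refine ⟨eqv.measurable, ?_⟩
    have := (measurePreserving_pi (fun _ : Fin n × Fin n => gaussianReal 0 1)
      (fun _ : Fin n × Fin n => gaussianReal 0 1) (fun _ => hnegpres)).map_eq
    exact this
  -- the bad (null) set
  have hZ : μ {a : (Fin n × Fin n) → ℝ | MvPolynomial.eval a (badPoly n) = 0} = 0 :=
    mvpoly_null' (badPoly n) badPoly_ne_zero
  have hae : ∀ᵐ a ∂μ, MvPolynomial.eval a (badPoly n) ≠ 0 := by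
    rw [ae_iff]
    simpa using hZ
  -- pointwise identity off the bad set
  have hpoint : ∀ a : (Fin n × Fin n) → ℝ, MvPolynomial.eval a (badPoly n) ≠ 0 →
      (stabilityIndex (Matrix.of fun i j => (eqv a) (i, j)) = n - k
        ↔ stabilityIndex (Matrix.of fun i j => a (i, j)) = k) := by
    intro a ha
    have h0 : ∀ z ∈ (((Matrix.of fun i j => a (i, j)).charpoly).map (algebraMap ℝ ℂ)).roots,
        z.re ≠ 0 := fun z hz hz0 => ha (bad_root_eval_zero a hz hz0)
    have hneg : (Matrix.of fun i j => (eqv a) (i, j))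
        = -(Matrix.of fun i j => a (i, j)) := rfl
    rw [hneg, stab_neg _ h0]
    have hle := stab_le (Matrix.of fun i j => a (i, j))
    omega
  -- conclude
  have hmap : μ {a | stabilityIndex (Matrix.of fun i j => a (i, j)) = n - k}
      = μ (⇑eqv ⁻¹' {a | stabilityIndex (Matrix.of fun i j => a (i, j)) = n - k}) := by
    conv_lhs => rw [← hmp.map_eq]
    exact MeasurableEquiv.map_apply eqv _
  rw [hmap]
  apply measure_congr
  rw [Filter.eventuallyEq_set]
  filter_upwards [hae] with a ha
  simpa using (hpoint a ha).symm
end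

section
/- Let σ > 0 and ρ > 0, and let U ~ N(0, σ²) and V ~ N(0, ρ²) be independent normal random variables with zero mean. Then P(U² − V² > 0) = (2/π)·arctan(σ/ρ), and consequently P(U² − V² < 0) = (2/π)·arctan(ρ/σ). -/
open MeasureTheory ProbabilityTheory

section Stmt16Aux
open Real Set

lemma prod_gauss_withDensity :
    ((gaussianReal 0 1).prod (gaussianReal 0 1))
      = (volume : Measure (ℝ × ℝ)).withDensity
          (fun p => gaussianPDF 0 1 p.1 * gaussianPDF 0 1 p.2) := by
  refine Measure.prod_eq fun s t hs ht => ?_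
  rw [Measure.volume_eq_prod, withDensity_apply _ (hs.prod ht), ← Measure.prod_restrict,
    lintegral_prod_mul (measurable_gaussianPDF 0 1).aemeasurable
      (measurable_gaussianPDF 0 1).aemeasurable,
    gaussianReal_apply 0 one_ne_zero s, gaussianReal_apply 0 one_ne_zero t]

lemma rayleigh_int : ∫ r in Ioi (0:ℝ), r * rexp (-r ^ 2 / 2) = 1 := by
  have hderiv : ∀ x ∈ Ioi (0:ℝ), HasDerivAt (fun r : ℝ => -rexp (-r ^ 2 / 2))
      (x * rexp (-x ^ 2 / 2)) x := by
    intro x _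
    have h1 : HasDerivAt (fun r : ℝ => -r ^ 2 / 2) (-x) x := by
      have := ((hasDerivAt_pow 2 x).neg.div_const 2)
      exact this.congr_deriv (by push_cast; ring)
    exact (h1.exp).neg.congr_deriv (by ring)
  have htend : Filter.Tendsto (fun r : ℝ => -rexp (-r ^ 2 / 2)) Filter.atTop (nhds 0) := by
    rw [show (0:ℝ) = -0 by ring]
    apply Filter.Tendsto.neg
    have h2 : Filter.Tendsto (fun r : ℝ => r ^ 2 / 2) Filter.atTop Filter.atTop :=
      (Filter.tendsto_pow_atTop two_ne_zero).atTop_div_const two_pos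
    have := Real.tendsto_exp_neg_atTop_nhds_zero.comp h2
    simpa [Function.comp_def, neg_div] using this
  have hcont : ContinuousWithinAt (fun r : ℝ => -rexp (-r ^ 2 / 2)) (Ici 0) 0 :=
    (Continuous.continuousWithinAt (by continuity))
  have := integral_Ioi_of_hasDerivAt_of_nonneg (g := fun r : ℝ => -rexp (-r ^ 2 / 2))
    (g' := fun r : ℝ => r * rexp (-r ^ 2 / 2)) (a := 0) (l := 0)
    hcont hderiv (fun x hx => mul_nonneg (le_of_lt hx) (Real.exp_pos _).le) htend
  simpa using this

section
variable {a b : ℝ}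

lemma cos_two_arctan_div (ha : 0 < a) (hb : 0 < b) : cos (2 * arctan (a/b)) = (b^2 - a^2) / (a^2 + b^2) := by
  rw [Real.cos_two_mul, Real.cos_sq_arctan]
  have hb' : b ≠ 0 := hb.ne'
  have : a^2 + b^2 > 0 := by positivity
  field_simp
  ring

lemma cond_iff_cos (ha : 0 < a) (hb : 0 < b) (θ : ℝ) :
    0 < (a * cos θ) ^ 2 - (b * sin θ) ^ 2 ↔ cos (2 * arctan (a/b)) < cos (2 * θ) := by
  rw [cos_two_arctan_div ha hb, Real.cos_two_mul, div_lt_iff₀ (by positivity)]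
  have hs := Real.sin_sq_add_cos_sq θ
  constructor <;> intro h <;> nlinarith

lemma mem_U_iff' (α : ℝ) (hα1 : 0 < α) (hα2 : α < π/2) {θ : ℝ} (hθ : θ ∈ Ioo (-π) π) :
    cos (2 * α) < cos (2 * θ) ↔
      θ ∈ Ioo (-π) (-π + α) ∪ Ioo (-α) α ∪ Ioo (π - α) π := by
  have hπ := Real.pi_pos
  have hcosabs : cos (2 * θ) = cos (2 * |θ|) := by
    rcases le_or_gt 0 θ with h | h
    · rw [abs_of_nonneg h]
    · rw [abs_of_neg h]; rw [show (2 : ℝ) * -θ = -(2*θ) by ring, Real.cos_neg]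
  rcases le_or_gt (|θ|) (π/2) with h1 | h1
  · have key : cos (2 * α) < cos (2 * |θ|) ↔ |θ| < α := by
      constructor
      · intro h
        by_contra hc
        push_neg at hc
        exact absurd h (not_lt.2 (Real.strictAntiOn_cos.le_iff_ge
          ⟨by positivity, by linarith⟩ ⟨by linarith [abs_nonneg θ], by linarith⟩ |>.2
          (by linarith)))
      · intro h
        exact Real.strictAntiOn_cos ⟨by linarith [abs_nonneg θ], by linarith⟩
          ⟨by positivity, by linarith⟩ (by linarith)
    rw [hcosabs, key, abs_lt]
    simp only [Set.mem_union, Set.mem_Ioo]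
    constructor
    · rintro ⟨h2, h3⟩
      exact Or.inl (Or.inr ⟨h2, h3⟩)
    · rintro ((⟨h2, h3⟩ | ⟨h2, h3⟩) | ⟨h2, h3⟩)
      · rcases abs_le.1 h1 with ⟨h4, h5⟩; constructor <;> linarith
      · exact ⟨h2, h3⟩
      · rcases abs_le.1 h1 with ⟨h4, h5⟩; constructor <;> linarith
  · have hθπ : |θ| < π := abs_lt.2 ⟨hθ.1, hθ.2⟩
    have hcos2 : cos (2 * |θ|) = cos (2 * π - 2 * |θ|) := (Real.cos_two_pi_sub _).symm
    have key : cos (2 * α) < cos (2 * π - 2 * |θ|) ↔ π - α < |θ| := by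
      constructor
      · intro h
        by_contra hc
        push_neg at hc
        exact absurd h (not_lt.2 (Real.strictAntiOn_cos.le_iff_ge
          ⟨by linarith, by linarith⟩ ⟨by linarith, by linarith⟩ |>.2 (by linarith)))
      · intro h
        exact Real.strictAntiOn_cos ⟨by linarith, by linarith⟩
          ⟨by linarith, by linarith⟩ (by linarith)
    rw [hcosabs, hcos2, key]
    simp only [Set.mem_union, Set.mem_Ioo]
    constructor
    · intro h
      rcases le_or_gt 0 θ with h2 | h2
      · rw [abs_of_nonneg h2] at h hθπ
        exact Or.inr ⟨h, hθ.2⟩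
      · rw [abs_of_neg h2] at h
        exact Or.inl (Or.inl ⟨hθ.1, by linarith⟩)
    · rintro ((⟨h2, h3⟩ | ⟨h2, h3⟩) | ⟨h2, h3⟩)
      · rw [abs_of_neg (by linarith)]; linarith
      · have := abs_lt.2 ⟨h2, h3⟩; linarith
      · rw [abs_of_nonneg (by linarith)]; linarith

lemma volume_U (α : ℝ) (hα1 : 0 < α) (hα2 : α < π/2) :
    volume (Ioo (-π) (-π + α) ∪ Ioo (-α) α ∪ Ioo (π - α) π) = ENNReal.ofReal (4 * α) := by
  have hπ := Real.pi_pos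
  have hd2 : Disjoint (Ioo (-π) (-π + α) ∪ Ioo (-α) α) (Ioo (π - α) π) := by
    apply Disjoint.union_left <;>
    · rw [Set.Ioo_disjoint_Ioo]
      refine le_trans (min_le_left _ _) (le_trans ?_ (le_max_right _ _)) <;> linarith
  have hd1 : Disjoint (Ioo (-π) (-π + α)) (Ioo (-α) α) := by
    rw [Set.Ioo_disjoint_Ioo]
    refine le_trans (min_le_left _ _) (le_trans ?_ (le_max_right _ _)) <;> linarith
  rw [measure_union hd2 measurableSet_Ioo, measure_union hd1 measurableSet_Ioo,
    Real.volume_Ioo, Real.volume_Ioo, Real.volume_Ioo,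
    ← ENNReal.ofReal_add (by linarith) (by linarith),
    ← ENNReal.ofReal_add (by linarith) (by linarith)]
  congr 1
  ring
end
lemma key (a b : ℝ) (ha : 0 < a) (hb : 0 < b) :
    ((gaussianReal 0 1).prod (gaussianReal 0 1)) {p : ℝ × ℝ | 0 < (a * p.1) ^ 2 - (b * p.2) ^ 2}
      = ENNReal.ofReal (2 / π * arctan (a / b)) := by
  have hπ := Real.pi_pos
  set α := arctan (a/b) with hαdef
  have hα1 : 0 < α := by
    have := Real.arctan_strictMono (div_pos ha hb)
    rwa [Real.arctan_zero] at this
  have hα2 : α < π/2 := arctan_lt_pi_div_two _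
  set C : Set (ℝ × ℝ) := {p : ℝ × ℝ | 0 < (a * p.1) ^ 2 - (b * p.2) ^ 2} with hCdef
  set U : Set ℝ := Ioo (-π) (-π + α) ∪ Ioo (-α) α ∪ Ioo (π - α) π with hUdef
  have hUm : MeasurableSet U :=
    (measurableSet_Ioo.union measurableSet_Ioo).union measurableSet_Ioo
  have hCopen : IsOpen C := isOpen_lt continuous_const (by fun_prop)
  have hfint : Integrable (fun p : ℝ × ℝ =>
      gaussianPDFReal 0 1 p.1 * gaussianPDFReal 0 1 p.2) (volume : Measure (ℝ × ℝ)) := by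
    rw [Measure.volume_eq_prod]
    exact (integrable_gaussianPDFReal 0 1).mul_prod (integrable_gaussianPDFReal 0 1)
  have step1 : ((gaussianReal 0 1).prod (gaussianReal 0 1)) C
      = ENNReal.ofReal (∫ p in C, gaussianPDFReal 0 1 p.1 * gaussianPDFReal 0 1 p.2) := by
    rw [prod_gauss_withDensity, withDensity_apply _ hCopen.measurableSet]
    simp_rw [gaussianPDF, ← ENNReal.ofReal_mul (gaussianPDFReal_nonneg 0 1 _)]
    rw [← ofReal_integral_eq_lintegral_ofReal hfint.restrict
      (Filter.Eventually.of_forall fun p =>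
        mul_nonneg (gaussianPDFReal_nonneg _ _ _) (gaussianPDFReal_nonneg _ _ _))]
  have step2 : (∫ p in C, gaussianPDFReal 0 1 p.1 * gaussianPDFReal 0 1 p.2)
      = (∫ r in Ioi (0:ℝ), r * ((2*π)⁻¹ * rexp (-r^2/2)))
        * ∫ θ in Ioo (-π) π, U.indicator (fun _ => (1:ℝ)) θ := by
    rw [← integral_indicator hCopen.measurableSet, ← integral_comp_polarCoord_symm,
      Measure.volume_eq_prod, ← setIntegral_prod_mul]
    apply setIntegral_congr_fun (measurableSet_Ioi.prod measurableSet_Ioo)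
    rintro ⟨r, θ⟩ ⟨hr, hθ⟩
    simp only [mem_Ioi] at hr
    have hsymm : polarCoord.symm (r, θ) = (r * cos θ, r * sin θ) := rfl
    have hmem : ((r * cos θ, r * sin θ) ∈ C) ↔ θ ∈ U := by
      rw [hCdef, mem_setOf_eq,
        show (a * (r * cos θ)) ^ 2 - (b * (r * sin θ)) ^ 2
          = r ^ 2 * ((a * cos θ) ^ 2 - (b * sin θ) ^ 2) by ring,
        mul_pos_iff_of_pos_left (pow_pos hr 2), cond_iff_cos ha hb θ,
        mem_U_iff' α hα1 hα2 hθ]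
    dsimp only
    rw [hsymm]
    by_cases hU : θ ∈ U
    · rw [indicator_of_mem (hmem.2 hU), indicator_of_mem hU]
      simp only [gaussianPDFReal, NNReal.coe_one, mul_one, sub_zero, smul_eq_mul]
      have hexp : rexp (-(r * cos θ) ^ 2 / 2) * rexp (-(r * sin θ) ^ 2 / 2)
          = rexp (-r ^ 2 / 2) := by
        rw [← Real.exp_add]
        congr 1
        linear_combination (-(1:ℝ)/2) * r ^ 2 * Real.sin_sq_add_cos_sq θ
      have hs : (√(2*π))⁻¹ * (√(2*π))⁻¹ = (2*π)⁻¹ := by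
        rw [← mul_inv, Real.mul_self_sqrt (by positivity)]
      linear_combination r * rexp (-(r * cos θ) ^ 2 / 2) * rexp (-(r * sin θ) ^ 2 / 2) * hs
        + r * (2*π)⁻¹ * hexp
    · rw [indicator_of_notMem (fun hc => hU (hmem.1 hc)), indicator_of_notMem hU,
        smul_zero, mul_zero]
  have step3 : (∫ r in Ioi (0:ℝ), r * ((2*π)⁻¹ * rexp (-r^2/2))) = (2*π)⁻¹ := by
    simp_rw [show ∀ r : ℝ, r * ((2*π)⁻¹ * rexp (-r^2/2)) = (2*π)⁻¹ * (r * rexp (-r^2/2))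
      from fun r => by ring]
    rw [integral_const_mul, rayleigh_int, mul_one]
  have step4 : (∫ θ in Ioo (-π) π, U.indicator (fun _ => (1:ℝ)) θ) = 4 * α := by
    rw [setIntegral_indicator hUm]
    have hsub : Ioo (-π) π ∩ U = U := by
      refine inter_eq_self_of_subset_right (union_subset (union_subset ?_ ?_) ?_) <;>
        exact Ioo_subset_Ioo (by linarith) (by linarith)
    rw [hsub, setIntegral_const, Measure.real, volume_U α hα1 hα2,
      ENNReal.toReal_ofReal (by positivity), smul_eq_mul, mul_one]
  rw [step1, step2, step3, step4]
  congr 1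
  field_simp
  ring
lemma gauss_sq (σ : NNReal) :
    gaussianReal 0 (σ ^ 2) = Measure.map (fun x => (σ:ℝ) * x) (gaussianReal 0 1) := by
  rw [gaussianReal_map_const_mul]
  congr 1
  · ring
  · ext
    push_cast
    ring

lemma hset_open : MeasurableSet {p : ℝ × ℝ | 0 < p.1 ^ 2 - p.2 ^ 2} :=
  (isOpen_lt continuous_const (by fun_prop)).measurableSet

lemma key2 (σ ρ : NNReal) (hσ : 0 < σ) (hρ : 0 < ρ) :
    (Measure.prod (gaussianReal 0 (σ ^ 2)) (gaussianReal 0 (ρ ^ 2)))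
        {p : ℝ × ℝ | 0 < p.1 ^ 2 - p.2 ^ 2}
      = ENNReal.ofReal (2 / π * arctan ((σ : ℝ) / (ρ : ℝ))) := by
  rw [gauss_sq σ, gauss_sq ρ,
    Measure.map_prod_map _ _ (measurable_const_mul _) (measurable_const_mul _),
    Measure.map_apply (show Measurable (Prod.map (fun x : ℝ => (σ:ℝ) * x) (fun x : ℝ => (ρ:ℝ) * x)) by fun_prop) hset_open]
  have hpre : (Prod.map (fun x => (σ:ℝ) * x) (fun x => (ρ:ℝ) * x)) ⁻¹'
      {p : ℝ × ℝ | 0 < p.1 ^ 2 - p.2 ^ 2}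
      = {p : ℝ × ℝ | 0 < ((σ:ℝ) * p.1) ^ 2 - ((ρ:ℝ) * p.2) ^ 2} := rfl
  rw [hpre, key _ _ (by exact_mod_cast hσ) (by exact_mod_cast hρ)]

end Stmt16Aux

open Real Set in
/-- If `U ~ N(0, σ²)` and `V ~ N(0, ρ²)` are independent centered normal random
variables (`σ, ρ > 0`), then `P(U² - V² > 0) = (2/π) arctan(σ/ρ)` and consequently
`P(U² - V² < 0) = (2/π) arctan(ρ/σ)`. -/
theorem stmt_16 (σ ρ : NNReal) (hσ : 0 < σ) (hρ : 0 < ρ) :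
    (Measure.prod (gaussianReal 0 (σ ^ 2)) (gaussianReal 0 (ρ ^ 2)))
        {p : ℝ × ℝ | 0 < p.1 ^ 2 - p.2 ^ 2}
      = ENNReal.ofReal (2 / Real.pi * Real.arctan ((σ : ℝ) / (ρ : ℝ)))
    ∧ (Measure.prod (gaussianReal 0 (σ ^ 2)) (gaussianReal 0 (ρ ^ 2)))
        {p : ℝ × ℝ | p.1 ^ 2 - p.2 ^ 2 < 0}
      = ENNReal.ofReal (2 / Real.pi * Real.arctan ((ρ : ℝ) / (σ : ℝ))) := by
  refine ⟨key2 σ ρ hσ hρ, ?_⟩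
  have hswap : {p : ℝ × ℝ | p.1 ^ 2 - p.2 ^ 2 < 0}
      = Prod.swap ⁻¹' {p : ℝ × ℝ | 0 < p.1 ^ 2 - p.2 ^ 2} := by
    ext p
    simp only [mem_setOf_eq, mem_preimage, Prod.fst_swap, Prod.snd_swap]
    constructor <;> intro h <;> linarith
  rw [hswap, ← Measure.map_apply measurable_swap hset_open, Measure.prod_swap,
    key2 ρ σ hρ hσ]
end
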